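/- Let f_n: (a,b) → ℝ be a sequence of convex differentiable functions converging pointwise to f: (a,b) → ℝ. Then f is convex, and for each c ∈ (a,b) and ε > 0 there exist δ > 0 and N ∈ ℕ such that for all n ≥ N, |f_n'(c+δ) − f'_+(c)| < ε and |f_n'(c−δ) − f'_−(c)| < ε, where f'_± denote the one-sided derivatives of f at c. -/
import Mathlib

open Set Filter

private lemma stmt13_helper1 {gc gx gy L ε d d' : ℝ} (hd : 0 < d) (hdd : d ≤ d' / 2)
    (h1 : (gy - gc) / d' < L + ε / 3) (h2 : L ≤ (gx - gc) / d) (hε : 0 < ε) :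
    (gy - gx) / (d' - d) < L + ε := by
  have hd' : 0 < d' := by linarith
  have hyx : 0 < d' - d := by linarith
  rw [div_lt_iff₀ hyx]
  have h1' : gy - gc < (L + ε / 3) * d' := (div_lt_iff₀ hd').1 h1
  have h2' : L * d ≤ gx - gc := (le_div_iff₀ hd).1 h2
  have hkey : ε * d' ≤ 2 * (ε * (d' - d)) := by nlinarith
  nlinarith

private lemma stmt13_helper2 {gc gz gy M ε d d' : ℝ} (hd : 0 < d) (hdd : d ≤ d' / 2)
    (h1 : M - ε / 3 < (gc - gy) / d') (h2 : (gc - gz) / d ≤ M) (hε : 0 < ε) :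
    M - ε < (gz - gy) / (d' - d) := by
  have hd' : 0 < d' := by linarith
  have hyx : 0 < d' - d := by linarith
  rw [lt_div_iff₀ hyx]
  have h1' : (M - ε / 3) * d' < gc - gy := (lt_div_iff₀ hd').1 h1
  have h2' : gc - gz ≤ M * d := (div_le_iff₀ hd).1 h2
  have hkey : ε * d' ≤ 2 * (ε * (d' - d)) := by nlinarith
  nlinarith

theorem stmt13 (a b : ℝ) (hab : a < b) (f : ℕ → ℝ → ℝ) (g : ℝ → ℝ)
    (hconv : ∀ n, ConvexOn ℝ (Set.Ioo a b) (f n))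
    (hdiff : ∀ n, ∀ x ∈ Set.Ioo a b, DifferentiableAt ℝ (f n) x)
    (hptwise : ∀ x ∈ Set.Ioo a b,
      Filter.Tendsto (fun n => f n x) Filter.atTop (nhds (g x))) :
    ConvexOn ℝ (Set.Ioo a b) g ∧
    ∀ c ∈ Set.Ioo a b, ∀ ε > 0, ∃ δ > 0,
      c + δ ∈ Set.Ioo a b ∧ c - δ ∈ Set.Ioo a b ∧
      ∃ N : ℕ, ∀ n ≥ N,
        |deriv (f n) (c + δ) - derivWithin g (Set.Ioi c) c| < ε ∧
        |deriv (f n) (c - δ) - derivWithin g (Set.Iio c) c| < ε := by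
  have hg : ConvexOn ℝ (Set.Ioo a b) g := by
    refine ⟨convex_Ioo a b, fun x hx y hy p q hp hq hpq => ?_⟩
    have hmem : p • x + q • y ∈ Set.Ioo a b := (convex_Ioo a b) hx hy hp hq hpq
    exact le_of_tendsto_of_tendsto' (hptwise _ hmem)
      (((hptwise x hx).const_smul p).add ((hptwise y hy).const_smul q))
      fun n => (hconv n).2 hx hy hp hq hpq
  refine ⟨hg, fun c hc ε hε => ?_⟩
  have hac := hc.1
  have hcb := hc.2
  set Sl := slope g c with hSl
  have hmono : MonotoneOn Sl (Set.Ioo a b \ {c}) := hg.slope_mono hc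
  -- auxiliary points on each side
  obtain ⟨w, hw⟩ : (Set.Ioo a c).Nonempty := nonempty_Ioo.2 hac
  obtain ⟨v, hv⟩ : (Set.Ioo c b).Nonempty := nonempty_Ioo.2 hcb
  have hwmem : w ∈ Set.Ioo a b \ {c} := ⟨⟨hw.1, hw.2.trans hcb⟩, hw.2.ne⟩
  have hvmem : v ∈ Set.Ioo a b \ {c} := ⟨⟨hac.trans hv.1, hv.2⟩, hv.1.ne'⟩
  have hsubR : Set.Ioo c b ⊆ Set.Ioo a b \ {c} := fun y hy =>
    ⟨⟨hac.trans hy.1, hy.2⟩, hy.1.ne'⟩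
  have hsubL : Set.Ioo a c ⊆ Set.Ioo a b \ {c} := fun y hy =>
    ⟨⟨hy.1, hy.2.trans hcb⟩, hy.2.ne⟩
  -- right derivative
  have hbddR : BddBelow (Sl '' Set.Ioo c b) := by
    refine ⟨Sl w, fun t ht => ?_⟩
    obtain ⟨y, hy, rfl⟩ := ht
    exact hmono hwmem (hsubR hy) (hw.2.trans hy.1).le
  set L := sInf (Sl '' Set.Ioo c b) with hLdef
  have htendR : Filter.Tendsto Sl (nhdsWithin c (Set.Ioi c)) (nhds L) :=
    MonotoneOn.tendsto_nhdsWithin_Ioo_right (nonempty_Ioo.2 hcb)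
      (hmono.mono hsubR) hbddR
  have hderivR : HasDerivWithinAt g L (Set.Ioi c) c :=
    (hasDerivWithinAt_iff_tendsto_slope' notMem_Ioi_self).2 htendR
  have hLeq : derivWithin g (Set.Ioi c) c = L :=
    hderivR.derivWithin (uniqueDiffWithinAt_Ioi c)
  have hLle : ∀ y ∈ Set.Ioo c b, L ≤ Sl y := fun y hy => csInf_le hbddR ⟨y, hy, rfl⟩
  -- left derivative
  have hbddL : BddAbove (Sl '' Set.Ioo a c) := by
    refine ⟨Sl v, fun t ht => ?_⟩
    obtain ⟨y, hy, rfl⟩ := ht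
    exact hmono (hsubL hy) hvmem (hy.2.trans hv.1).le
  set M := sSup (Sl '' Set.Ioo a c) with hMdef
  have htendL : Filter.Tendsto Sl (nhdsWithin c (Set.Iio c)) (nhds M) :=
    MonotoneOn.tendsto_nhdsWithin_Ioo_left (nonempty_Ioo.2 hac)
      (hmono.mono hsubL) hbddL
  have hderivL : HasDerivWithinAt g M (Set.Iio c) c :=
    (hasDerivWithinAt_iff_tendsto_slope' notMem_Iio_self).2 htendL
  have hMeq : derivWithin g (Set.Iio c) c = M :=
    hderivL.derivWithin (uniqueDiffWithinAt_Iio c)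
  have hMle : ∀ y ∈ Set.Ioo a c, Sl y ≤ M := fun y hy => le_csSup hbddL ⟨y, hy, rfl⟩
  -- choose yR close on the right with small slope
  obtain ⟨yR, hyR1, hyR2⟩ : ∃ y, Sl y < L + ε / 3 ∧ y ∈ Set.Ioo c b :=
    ((htendR.eventually_lt_const (by linarith : L < L + ε / 3)).and
      (eventually_mem_set.2 (Ioo_mem_nhdsGT hcb))).exists
  obtain ⟨yL, hyL1, hyL2⟩ : ∃ y, M - ε / 3 < Sl y ∧ y ∈ Set.Ioo a c :=
    ((htendL.eventually_const_lt (by linarith : M - ε / 3 < M)).and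
      (eventually_mem_set.2 (Ioo_mem_nhdsLT hac))).exists
  -- choose δ
  set δ := min ((yR - c) / 2) ((c - yL) / 2) with hδdef
  have hδ : 0 < δ := lt_min (by linarith [hyR2.1]) (by linarith [hyL2.2])
  have hδR : δ ≤ (yR - c) / 2 := min_le_left _ _
  have hδL : δ ≤ (c - yL) / 2 := min_le_right _ _
  set x := c + δ with hxdef
  set z := c - δ with hzdef
  have hcx : c < x := by simp [hxdef]; linarith
  have hxyR : x < yR := by simp [hxdef]; linarith [hyR2.1]
  have hzc : z < c := by simp [hzdef]; linarith
  have hyLz : yL < z := by simp [hzdef]; linarith [hyL2.2]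
  have hxab : x ∈ Set.Ioo a b := ⟨hac.trans hcx, hxyR.trans hyR2.2⟩
  have hzab : z ∈ Set.Ioo a b := ⟨hyL2.1.trans hyLz, hzc.trans hcb⟩
  have hyRab : yR ∈ Set.Ioo a b := ⟨hac.trans hyR2.1, hyR2.2⟩
  have hyLab : yL ∈ Set.Ioo a b := ⟨hyL2.1, hyL2.2.trans hcb⟩
  -- slope bounds for g
  have hSx : L ≤ Sl x := hLle x ⟨hcx, hxyR.trans hyR2.2⟩
  have hSz : Sl z ≤ M := hMle z ⟨hyL2.1.trans hyLz, hzc⟩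
  have hxc : x - c = δ := by simp [hxdef]
  have hcz : c - z = δ := by simp [hzdef]
  have hslopeR : slope g x yR < L + ε := by
    rw [slope_def_field]
    have h1' : (g yR - g c) / (yR - c) < L + ε / 3 := by
      have := hyR1; rwa [hSl, slope_def_field] at this
    have h2' : L ≤ (g x - g c) / (x - c) := by
      have := hSx; rwa [hSl, slope_def_field] at this
    have h := stmt13_helper1 (gc := g c) (gx := g x) (gy := g yR)
      (d := x - c) (d' := yR - c) (by rw [hxc]; exact hδ)
      (by rw [hxc]; linarith) h1' h2' hε
    rwa [show yR - c - (x - c) = yR - x by ring] at h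
  have hslopeL : M - ε < slope g yL z := by
    rw [slope_def_field]
    have h1' : M - ε / 3 < (g c - g yL) / (c - yL) := by
      have := hyL1
      rw [hSl, slope_def_field, show g yL - g c = -(g c - g yL) by ring,
        show yL - c = -(c - yL) by ring, neg_div_neg_eq] at this
      exact this
    have h2' : (g c - g z) / (c - z) ≤ M := by
      have := hSz
      rw [hSl, slope_def_field, show g z - g c = -(g c - g z) by ring,
        show z - c = -(c - z) by ring, neg_div_neg_eq] at this
      exact this
    have h := stmt13_helper2 (gc := g c) (gz := g z) (gy := g yL)
      (d := c - z) (d' := c - yL) (by rw [hcz]; exact hδ)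
      (by rw [hcz]; linarith) h1' h2' hε
    rwa [show c - yL - (c - z) = z - yL by ring] at h
  -- convergence of slopes of f n
  have hslope_tend : ∀ u ∈ Set.Ioo a b, ∀ t ∈ Set.Ioo a b,
      Filter.Tendsto (fun n => slope (f n) u t) Filter.atTop (nhds (slope g u t)) := by
    intro u hu t ht
    simp_rw [slope_def_field]
    exact ((hptwise t ht).sub (hptwise u hu)).div_const _
  have e1 : ∀ᶠ n in Filter.atTop, L - ε < slope (f n) c x :=
    (hslope_tend c hc x hxab).eventually_const_lt (by
      have : L ≤ slope g c x := hSx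
      linarith)
  have e2 : ∀ᶠ n in Filter.atTop, slope (f n) x yR < L + ε :=
    (hslope_tend x hxab yR hyRab).eventually_lt_const hslopeR
  have e3 : ∀ᶠ n in Filter.atTop, M - ε < slope (f n) yL z :=
    (hslope_tend yL hyLab z hzab).eventually_const_lt hslopeL
  have e4 : ∀ᶠ n in Filter.atTop, slope (f n) z c < M + ε :=
    (hslope_tend z hzab c hc).eventually_lt_const (by
      have : slope g z c ≤ M := by rw [slope_comm]; exact hSz
      linarith)
  obtain ⟨N, hN⟩ := Filter.eventually_atTop.1 (((e1.and e2).and (e3.and e4)))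
  refine ⟨δ, hδ, hxab, hzab, N, fun n hn => ?_⟩
  obtain ⟨⟨h1, h2⟩, h3, h4⟩ := hN n hn
  have hd1 : slope (f n) c x ≤ deriv (f n) x :=
    (hconv n).slope_le_deriv hc hxab hcx (hdiff n x hxab)
  have hd2 : deriv (f n) x ≤ slope (f n) x yR :=
    (hconv n).deriv_le_slope hxab hyRab hxyR (hdiff n x hxab)
  have hd3 : slope (f n) yL z ≤ deriv (f n) z :=
    (hconv n).slope_le_deriv hyLab hzab hyLz (hdiff n z hzab)
  have hd4 : deriv (f n) z ≤ slope (f n) z c :=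
    (hconv n).deriv_le_slope hzab hc hzc (hdiff n z hzab)
  rw [hLeq, hMeq]
  constructor
  · rw [abs_lt]; constructor <;> linarith
  · rw [abs_lt]; constructor <;> linarith
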